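/- Gap between successive least-squares estimates (deterministic form): fix integers d ≥ 1, t ≥ 1 and reals T ≥ 1, L ≥ 1 with log(dLT) ≥ 1 and dL ≥ 1. Let θ* ∈ ℝ^d, let a_1,…,a_{t+1} ∈ ℝ^d satisfy ‖a_s‖₂ ≤ L, let η_1,…,η_{t+1} ∈ ℝ, set y_s = ⟨θ*, a_s⟩ + η_s, V_s = I_d + Σ_{r=1}^s a_r a_r', and θ̂_s = V_s^{-1} Σ_{r=1}^s a_r y_r. Suppose |η_{t+1}| ≤ 2√(log T), λ_min(V_t) ≥ 5L²√T·log(dLT), λ_min(V_{t+1}) ≥ 5L²√T·log(dLT), and ‖θ* − θ̂_t‖_{V_t} ≤ √β for some β ≥ 1. Then ‖θ̂_{t+1} − θ̂_t‖₂ ≤ (3/(5L))·√(β/(T log(dLT))). -/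

import Mathlib

/-- The Euclidean (ℓ²) norm of a vector in `ℝ^d`. -/
noncomputable def l2 {d : ℕ} (x : Fin d → ℝ) : ℝ := Real.sqrt (∑ i, x i ^ 2)

/-- The dot product of two vectors in `ℝ^d`. -/
def dotp {d : ℕ} (x y : Fin d → ℝ) : ℝ := ∑ i, x i * y i

/-- The outer product `a a'` of a column vector with itself. -/
def outer {d : ℕ} (x : Fin d → ℝ) : Matrix (Fin d) (Fin d) ℝ := fun i j => x i * x j

/-- The norm `‖x‖_V = √(x' V x)` induced by a positive definite matrix `V`. -/
noncomputable def normV {d : ℕ} (V : Matrix (Fin d) (Fin d) ℝ) (x : Fin d → ℝ) : ℝ :=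
  Real.sqrt (dotp x (V.mulVec x))

/-- The smallest eigenvalue of a symmetric matrix, as the infimum of the Rayleigh quotient
over the unit sphere. -/
noncomputable def lambdaMin {d : ℕ} (V : Matrix (Fin d) (Fin d) ℝ) : ℝ :=
  sInf {r : ℝ | ∃ x : Fin d → ℝ, l2 x = 1 ∧ r = dotp x (V.mulVec x)}

open scoped Matrix
namespace aux
variable {d : ℕ}

lemma dotp_eq (x y : Fin d → ℝ) : dotp x y = dotProduct x y := rfl

lemma dotp_comm (x y : Fin d → ℝ) : dotp x y = dotp y x := by
  simp [dotp_eq, dotProduct_comm]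

lemma dotp_self (x : Fin d → ℝ) : dotp x x = ∑ i, x i ^ 2 := by
  simp [dotp, sq]

lemma l2_nonneg (x : Fin d → ℝ) : 0 ≤ l2 x := Real.sqrt_nonneg _

lemma l2_sq (x : Fin d → ℝ) : l2 x ^ 2 = dotp x x := by
  rw [dotp_self, l2, Real.sq_sqrt (Finset.sum_nonneg fun i _ => sq_nonneg _)]

lemma dotp_self_nonneg (x : Fin d → ℝ) : 0 ≤ dotp x x := by
  rw [← l2_sq]; positivity

lemma l2_eq_sqrt_dotp (x : Fin d → ℝ) : l2 x = Real.sqrt (dotp x x) := by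
  rw [dotp_self]; rfl

lemma l2_eq_zero {x : Fin d → ℝ} (h : l2 x = 0) : x = 0 := by
  have h2 : dotp x x = 0 := by rw [← l2_sq, h]; ring
  rw [dotp_self] at h2
  funext i
  have := (Finset.sum_eq_zero_iff_of_nonneg (fun i _ => sq_nonneg (x i))).1 h2 i (Finset.mem_univ i)
  exact pow_eq_zero_iff (n := 2) (by norm_num) |>.1 this

lemma l2_smul (c : ℝ) (x : Fin d → ℝ) : l2 (c • x) = |c| * l2 x := by
  rw [l2_eq_sqrt_dotp, l2_eq_sqrt_dotp]
  have : dotp (c • x) (c • x) = c ^ 2 * dotp x x := by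
    simp [dotp, Finset.mul_sum]; ring_nf
  rw [this, Real.sqrt_mul (sq_nonneg c), Real.sqrt_sq_eq_abs]

/-- Cauchy-Schwarz -/
lemma abs_dotp_le (x y : Fin d → ℝ) : |dotp x y| ≤ l2 x * l2 y := by
  have h := Finset.sum_mul_sq_le_sq_mul_sq Finset.univ x y
  have : |dotp x y| = Real.sqrt ((dotp x y) ^ 2) := (Real.sqrt_sq_eq_abs _).symm
  rw [this]
  calc Real.sqrt ((dotp x y) ^ 2) ≤ Real.sqrt ((∑ i, x i ^ 2) * ∑ i, y i ^ 2) :=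
        Real.sqrt_le_sqrt h
    _ = l2 x * l2 y := by
        rw [Real.sqrt_mul (Finset.sum_nonneg fun i _ => sq_nonneg _)]; rfl

lemma dotp_mulVec (M : Matrix (Fin d) (Fin d) ℝ) (x y : Fin d → ℝ) :
    dotp (M.mulVec x) y = dotp x (Mᵀ.mulVec y) := by
  simp [dotp_eq, Matrix.dotProduct_mulVec, dotProduct_comm, Matrix.vecMul_transpose]


lemma dotp_sum {ι : Type*} (x : Fin d → ℝ) (s : Finset ι) (v : ι → Fin d → ℝ) :
    dotp x (∑ r ∈ s, v r) = ∑ r ∈ s, dotp x (v r) := by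
  simp only [dotp, Finset.sum_apply, Finset.mul_sum]
  rw [Finset.sum_comm]

lemma dotp_smul_right (c : ℝ) (x y : Fin d → ℝ) : dotp x (c • y) = c * dotp x y := by
  simp only [dotp, Pi.smul_apply, smul_eq_mul, Finset.mul_sum]
  exact Finset.sum_congr rfl fun i _ => by ring

lemma dotp_sub_right (x y z : Fin d → ℝ) : dotp x (y - z) = dotp x y - dotp x z := by
  simp only [dotp, Pi.sub_apply, mul_sub, Finset.sum_sub_distrib]

lemma outer_transpose (b : Fin d → ℝ) : (outer b)ᵀ = outer b := by
  funext i j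
  simp only [Matrix.transpose_apply, outer]
  ring

lemma dotp_add_left (x y z : Fin d → ℝ) : dotp (x + y) z = dotp x z + dotp y z := by
  simp only [dotp, Pi.add_apply, add_mul, Finset.sum_add_distrib]

lemma dotp_add_right (x y z : Fin d → ℝ) : dotp x (y + z) = dotp x y + dotp x z := by
  simp only [dotp, Pi.add_apply, mul_add, Finset.sum_add_distrib]

lemma outer_mulVec (b x : Fin d → ℝ) : (outer b).mulVec x = (dotp b x) • b := by
  funext i
  simp [outer, Matrix.mulVec, dotProduct, dotp, Finset.sum_mul, Finset.mul_sum]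
  exact Finset.sum_congr rfl fun j _ => by ring

lemma quadform_eq (s : ℕ) (a : ℕ → (Fin d → ℝ)) (x : Fin d → ℝ) :
    dotp x (((1 : Matrix (Fin d) (Fin d) ℝ) + ∑ r ∈ Finset.Icc 1 s, outer (a r)).mulVec x)
      = dotp x x + ∑ r ∈ Finset.Icc 1 s, (dotp (a r) x) ^ 2 := by
  rw [Matrix.add_mulVec, Matrix.one_mulVec]
  have hsum : (∑ r ∈ Finset.Icc 1 s, outer (a r)).mulVec x
      = ∑ r ∈ Finset.Icc 1 s, (dotp (a r) x) • (a r) := by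
    funext i
    simp only [Matrix.mulVec, dotProduct, Finset.sum_apply, Matrix.sum_apply, outer, dotp,
      Pi.smul_apply, smul_eq_mul, Finset.sum_mul, Finset.mul_sum]
    rw [Finset.sum_comm]
    exact Finset.sum_congr rfl fun r _ => Finset.sum_congr rfl fun j _ => by ring
  rw [hsum, dotp_add_right, dotp_sum]
  congr 1
  exact Finset.sum_congr rfl fun r _ => by
    rw [dotp_smul_right, dotp_comm x (a r), sq]


/-- lower bound on Rayleigh quotient for unit vectors -/
lemma lambdaMin_le {V : Matrix (Fin d) (Fin d) ℝ} (hpsd : ∀ z, 0 ≤ dotp z (V.mulVec z))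
    {x : Fin d → ℝ} (hx : l2 x = 1) : lambdaMin V ≤ dotp x (V.mulVec x) :=
  csInf_le ⟨0, fun r ⟨z, _, hr⟩ => hr ▸ hpsd z⟩ ⟨x, hx, rfl⟩

lemma dotp_smul_left (c : ℝ) (x y : Fin d → ℝ) : dotp (c • x) y = c * dotp x y := by
  rw [dotp_comm, dotp_smul_right, dotp_comm]

lemma quad_lower {V : Matrix (Fin d) (Fin d) ℝ} {μ : ℝ} (hμ0 : 0 ≤ μ)
    (hpsd : ∀ z, 0 ≤ dotp z (V.mulVec z)) (hμ : μ ≤ lambdaMin V) (x : Fin d → ℝ) :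
    μ * l2 x ^ 2 ≤ dotp x (V.mulVec x) := by
  rcases eq_or_ne x 0 with rfl | hx
  · have : l2 (0 : Fin d → ℝ) = 0 := by simp [l2]
    rw [this]
    simpa using hpsd 0
  · have hc : 0 < l2 x := by
      rcases (l2_nonneg x).lt_or_eq with h | h
      · exact h
      · exact absurd (l2_eq_zero h.symm) hx
    set c := l2 x with hcdef
    have hu : l2 (c⁻¹ • x) = 1 := by
      rw [l2_smul, abs_of_pos (inv_pos.2 hc)]
      field_simp
      exact hcdef.symm
    have h1 := lambdaMin_le hpsd hu
    have h2 : dotp (c⁻¹ • x) (V.mulVec (c⁻¹ • x)) = c⁻¹ * c⁻¹ * dotp x (V.mulVec x) := by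
      rw [Matrix.mulVec_smul, dotp_smul_left, dotp_smul_right]
      ring
    rw [h2] at h1
    have hle := le_trans hμ h1
    have hcc : c⁻¹ * c = 1 := inv_mul_cancel₀ hc.ne'
    calc μ * c ^ 2 ≤ (c⁻¹ * c⁻¹ * dotp x (V.mulVec x)) * c ^ 2 :=
          mul_le_mul_of_nonneg_right hle (sq_nonneg c)
      _ = (c⁻¹ * c) * (c⁻¹ * c) * dotp x (V.mulVec x) := by ring
      _ = dotp x (V.mulVec x) := by rw [hcc]; ring

/-- Cauchy–Schwarz for a symmetric PSD quadratic form. -/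
lemma quad_cs {V : Matrix (Fin d) (Fin d) ℝ} (hsym : Vᵀ = V)
    (hpsd : ∀ z, 0 ≤ dotp z (V.mulVec z)) (x y : Fin d → ℝ) :
    (dotp x (V.mulVec y)) ^ 2 ≤ dotp x (V.mulVec x) * dotp y (V.mulVec y) := by
  have hBsym : ∀ u v : Fin d → ℝ, dotp u (V.mulVec v) = dotp v (V.mulVec u) := by
    intro u v
    rw [dotp_comm, dotp_mulVec, hsym]
  have key : ∀ c : ℝ, 0 ≤ dotp y (V.mulVec y) * (c * c)
      + (2 * dotp x (V.mulVec y)) * c + dotp x (V.mulVec x) := by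
    intro c
    have h0 := hpsd (x + c • y)
    have : dotp (x + c • y) (V.mulVec (x + c • y))
        = dotp y (V.mulVec y) * (c * c) + (2 * dotp x (V.mulVec y)) * c
          + dotp x (V.mulVec x) := by
      rw [Matrix.mulVec_add, Matrix.mulVec_smul, dotp_add_left, dotp_add_right,
        dotp_add_right, dotp_smul_left, dotp_smul_left, dotp_smul_right, dotp_smul_right,
        hBsym y x]
      ring
    linarith [this ▸ h0]
  have hd := discrim_le_zero key
  rw [discrim] at hd
  nlinarith [hd]


lemma inv_bound {V : Matrix (Fin d) (Fin d) ℝ} {μ : ℝ} (hμ : 0 < μ)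
    (hpsd : ∀ z, 0 ≤ dotp z (V.mulVec z)) (hlb : μ ≤ lambdaMin V)
    (hVV : V * V⁻¹ = 1) (w : Fin d → ℝ) :
    l2 (V⁻¹.mulVec w) ≤ l2 w / μ := by
  set u := V⁻¹.mulVec w with hu
  have hVu : V.mulVec u = w := by rw [hu, Matrix.mulVec_mulVec, hVV, Matrix.one_mulVec]
  have h1 : μ * l2 u ^ 2 ≤ dotp u w := by
    have := quad_lower hμ.le hpsd hlb u
    rwa [hVu] at this
  have h2 : dotp u w ≤ l2 u * l2 w := le_trans (le_abs_self _) (abs_dotp_le u w)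
  rcases (l2_nonneg u).lt_or_eq with hc | hc
  · rw [le_div_iff₀ hμ]
    nlinarith
  · rw [← hc]
    exact div_nonneg (l2_nonneg w) hμ.le

lemma numeric (L T g logT β : ℝ) (hL : 1 ≤ L) (hT : 1 ≤ T) (hg : 1 ≤ g) (hβ : 1 ≤ β)
    (hlt : Real.sqrt logT ≤ Real.sqrt g) :
    (Real.sqrt (L ^ 2 * β / (5 * L ^ 2 * Real.sqrt T * g)) + 2 * Real.sqrt logT)
        * (L / (5 * L ^ 2 * Real.sqrt T * g))
      ≤ (3 / (5 * L)) * Real.sqrt (β / (T * g)) := by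
  have hL0 : (0:ℝ) < L := by linarith
  have hg0 : (0:ℝ) < g := by linarith
  have hβ0 : (0:ℝ) < β := by linarith
  have hsT : 1 ≤ Real.sqrt T := by
    rw [show (1:ℝ) = Real.sqrt 1 by simp]
    exact Real.sqrt_le_sqrt hT
  have hsT0 : (0:ℝ) < Real.sqrt T := by linarith
  set sT := Real.sqrt T with hsTdef
  have hsg : 1 ≤ Real.sqrt g := by
    rw [show (1:ℝ) = Real.sqrt 1 by simp]
    exact Real.sqrt_le_sqrt hg
  set sg := Real.sqrt g with hsgdef
  have hsg2 : sg * sg = g := Real.mul_self_sqrt hg0.le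
  have hsβ : 1 ≤ Real.sqrt β := by
    rw [show (1:ℝ) = Real.sqrt 1 by simp]
    exact Real.sqrt_le_sqrt hβ
  set sβ := Real.sqrt β with hsβdef
  -- rewrite the RHS sqrt
  have hR : Real.sqrt (β / (T * g)) = sβ / (sT * sg) := by
    rw [Real.sqrt_div hβ0.le, Real.sqrt_mul (by linarith : (0:ℝ) ≤ T)]
  -- bound the first sqrt
  have hA : Real.sqrt (L ^ 2 * β / (5 * L ^ 2 * sT * g)) ≤ sβ / (2 * sg) := by
    have h1 : L ^ 2 * β / (5 * L ^ 2 * sT * g) ≤ β / (4 * g) := by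
      rw [div_le_div_iff₀ (by positivity) (by positivity)]
      nlinarith [sq_nonneg L, mul_pos (mul_pos (by positivity : (0:ℝ) < L^2) hβ0) hg0]
    calc Real.sqrt (L ^ 2 * β / (5 * L ^ 2 * sT * g)) ≤ Real.sqrt (β / (4 * g)) :=
          Real.sqrt_le_sqrt h1
      _ = sβ / (2 * sg) := by
          rw [Real.sqrt_div hβ0.le, Real.sqrt_mul (by norm_num : (0:ℝ) ≤ 4),
            show Real.sqrt 4 = 2 by rw [show (4:ℝ) = 2^2 by norm_num, Real.sqrt_sq (by norm_num)]]
  rw [hR]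
  have hstep : (Real.sqrt (L ^ 2 * β / (5 * L ^ 2 * sT * g)) + 2 * Real.sqrt logT)
      * (L / (5 * L ^ 2 * sT * g)) ≤ (sβ / (2 * sg) + 2 * sg) * (L / (5 * L ^ 2 * sT * g)) := by
    apply mul_le_mul_of_nonneg_right _ (by positivity)
    have := hlt
    linarith [hA]
  refine le_trans hstep ?_
  have key : sβ + 4 * g ≤ 6 * (g * sβ) := by nlinarith
  have hsgne : sg ≠ 0 := by positivity
  have hsTne : sT ≠ 0 := by positivity
  have hLne : L ≠ 0 := hL0.ne'
  rw [div_add' _ _ _ (by positivity), div_mul_div_comm, div_mul_div_comm,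
    div_le_div_iff₀ (by positivity) (by positivity)]
  ring_nf
  nlinarith [key, mul_pos hsT0 (by positivity : (0:ℝ) < sg), sq_nonneg (L*sT*sg),
    mul_pos (mul_pos hL0 hL0) (mul_pos hsT0 (by positivity : (0:ℝ) < sg))]

end aux

/-- **Gap between successive least-squares estimates (deterministic form).** Under bounded
actions, a bounded current noise term, a smallest-eigenvalue lower bound on `V_t, V_{t+1}`,
and a confidence bound `‖θ* − θ̂_t‖_{V_t} ≤ √β`, the successive regularized least-squares
estimates satisfy `‖θ̂_{t+1} − θ̂_t‖₂ ≤ (3/(5L)) √(β/(T log(dLT)))`. -/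
theorem stmt_8
    (d t : ℕ) (hd : 1 ≤ d) (ht : 1 ≤ t)
    (T L : ℝ) (hT : 1 ≤ T) (hL : 1 ≤ L)
    (hlog : 1 ≤ Real.log (d * L * T)) (hdL : 1 ≤ (d : ℝ) * L)
    (θstar : Fin d → ℝ)
    (a : ℕ → (Fin d → ℝ)) (ha : ∀ s ∈ Finset.Icc 1 (t + 1), l2 (a s) ≤ L)
    (η : ℕ → ℝ) (y : ℕ → ℝ)
    (hy : ∀ s ∈ Finset.Icc 1 (t + 1), y s = dotp θstar (a s) + η s)
    (V : ℕ → Matrix (Fin d) (Fin d) ℝ)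
    (hV : ∀ s, V s = (1 : Matrix (Fin d) (Fin d) ℝ) + ∑ r ∈ Finset.Icc 1 s, outer (a r))
    (θhat : ℕ → (Fin d → ℝ))
    (hθ : ∀ s, θhat s = (V s)⁻¹.mulVec (∑ r ∈ Finset.Icc 1 s, y r • a r))
    (hη : |η (t + 1)| ≤ 2 * Real.sqrt (Real.log T))
    (hmin₁ : 5 * L ^ 2 * Real.sqrt T * Real.log (d * L * T) ≤ lambdaMin (V t))
    (hmin₂ : 5 * L ^ 2 * Real.sqrt T * Real.log (d * L * T) ≤ lambdaMin (V (t + 1)))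
    (β : ℝ) (hβ : 1 ≤ β)
    (hconf : normV (V t) (θstar - θhat t) ≤ Real.sqrt β) :
    l2 (θhat (t + 1) - θhat t) ≤ (3 / (5 * L)) * Real.sqrt (β / (T * Real.log (d * L * T))) := by
  have hT0 : (0:ℝ) < T := by linarith
  have hL0 : (0:ℝ) < L := by linarith
  set g := Real.log (↑d * L * T) with hgdef
  have hg : 1 ≤ g := hlog
  have hsT0 : (0:ℝ) < Real.sqrt T := Real.sqrt_pos.2 hT0
  set lam := 5 * L ^ 2 * Real.sqrt T * g with hlamdef
  have hlam0 : (0:ℝ) < lam := by positivity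
  -- quadratic form of V s
  have hq : ∀ s x, dotp x ((V s).mulVec x)
      = dotp x x + ∑ r ∈ Finset.Icc 1 s, (dotp (a r) x) ^ 2 := by
    intro s x
    rw [hV s]
    exact aux.quadform_eq s a x
  have hpsd : ∀ s x, 0 ≤ dotp x ((V s).mulVec x) := by
    intro s x
    rw [hq]
    have h1 := aux.dotp_self_nonneg x
    have h2 : (0:ℝ) ≤ ∑ r ∈ Finset.Icc 1 s, (dotp (a r) x) ^ 2 :=
      Finset.sum_nonneg fun r _ => sq_nonneg _
    linarith
  have hsym : ∀ s, (V s)ᵀ = V s := by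
    intro s
    rw [hV s, Matrix.transpose_add, Matrix.transpose_one, Matrix.transpose_sum]
    congr 1
    exact Finset.sum_congr rfl fun r _ => aux.outer_transpose (a r)
  have hposdef : ∀ s, (V s).PosDef := by
    intro s
    rw [Matrix.posDef_iff_dotProduct_mulVec]
    constructor
    · show (V s)ᴴ = V s
      rw [Matrix.conjTranspose_eq_transpose_of_trivial, hsym s]
    · intro x hx
      have hstar : star x = x := by
        funext i
        simp
      rw [hstar]
      show 0 < dotp x ((V s).mulVec x)
      rw [hq]
      have h2 : (0:ℝ) ≤ ∑ r ∈ Finset.Icc 1 s, (dotp (a r) x) ^ 2 :=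
        Finset.sum_nonneg fun r _ => sq_nonneg _
      have h3 : 0 < dotp x x := by
        rw [← aux.l2_sq]
        have h4 : l2 x ≠ 0 := fun h => hx (aux.l2_eq_zero h)
        have := aux.l2_nonneg x
        positivity
      linarith
  have hdet : ∀ s, IsUnit (V s).det := fun s => (hposdef s).det_pos.ne'.isUnit
  have hVV : ∀ s, V s * (V s)⁻¹ = 1 := fun s => Matrix.mul_nonsing_inv _ (hdet s)
  have hVV' : ∀ s, (V s)⁻¹ * V s = 1 := fun s => Matrix.nonsing_inv_mul _ (hdet s)
  have hmem : t + 1 ∈ Finset.Icc 1 (t + 1) := by simp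
  set b := a (t + 1) with hbdef
  set z := θstar - θhat t with hzdef
  have hb : l2 b ≤ L := ha (t + 1) hmem
  have hb0 : 0 ≤ l2 b := aux.l2_nonneg b
  -- the key identity
  have hS : (V t).mulVec (θhat t) = ∑ r ∈ Finset.Icc 1 t, y r • a r := by
    rw [hθ t, Matrix.mulVec_mulVec, hVV t, Matrix.one_mulVec]
  have hsum' : ∑ r ∈ Finset.Icc 1 (t + 1), y r • a r
      = (∑ r ∈ Finset.Icc 1 t, y r • a r) + y (t + 1) • b :=
    Finset.sum_Icc_succ_top (by omega) _
  have hVsucc : V (t + 1) = V t + outer b := by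
    rw [hV, hV, Finset.sum_Icc_succ_top (by omega), add_assoc]
  have hid : (V (t + 1)).mulVec (θhat (t + 1) - θhat t)
      = (y (t + 1) - dotp b (θhat t)) • b := by
    rw [Matrix.mulVec_sub, hθ (t + 1), Matrix.mulVec_mulVec, hVV (t + 1), Matrix.one_mulVec,
      hsum', hVsucc, Matrix.add_mulVec, hS, aux.outer_mulVec, sub_smul]
    abel
  have hdiff : θhat (t + 1) - θhat t
      = (y (t + 1) - dotp b (θhat t)) • ((V (t + 1))⁻¹.mulVec b) := by
    have h := congrArg (fun v => (V (t + 1))⁻¹.mulVec v) hid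
    simpa only [Matrix.mulVec_mulVec, hVV' (t + 1), Matrix.one_mulVec, Matrix.mulVec_smul]
      using h
  set c := y (t + 1) - dotp b (θhat t) with hcdef
  -- bound on the inverse applied to b
  have hinvb : l2 ((V (t + 1))⁻¹.mulVec b) ≤ L / lam := by
    calc l2 ((V (t + 1))⁻¹.mulVec b) ≤ l2 b / lam :=
          aux.inv_bound hlam0 (hpsd (t + 1)) hmin₂ (hVV (t + 1)) b
      _ ≤ L / lam := by gcongr
  -- bound |dotp b z|
  have hdbz : |dotp b z| ≤ Real.sqrt (L ^ 2 * β / lam) := by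
    set u := (V t)⁻¹.mulVec b with hudef
    have hub : (V t).mulVec u = b := by
      rw [hudef, Matrix.mulVec_mulVec, hVV t, Matrix.one_mulVec]
    have hrepr : dotp b z = dotp u ((V t).mulVec z) := by
      rw [← hub, aux.dotp_mulVec, hsym t]
    have hcs := aux.quad_cs (hsym t) (hpsd t) u z
    have huu : dotp u ((V t).mulVec u) ≤ L ^ 2 / lam := by
      rw [hub]
      have h1 : dotp u b ≤ l2 u * l2 b := le_trans (le_abs_self _) (aux.abs_dotp_le u b)
      have h2 : l2 u ≤ l2 b / lam := aux.inv_bound hlam0 (hpsd t) hmin₁ (hVV t) b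
      calc dotp u b ≤ l2 u * l2 b := h1
        _ ≤ (l2 b / lam) * l2 b := by gcongr
        _ = l2 b ^ 2 / lam := by ring
        _ ≤ L ^ 2 / lam := by gcongr
    have hzz : dotp z ((V t).mulVec z) ≤ β := by
      have h0 := hpsd t z
      have h1 : normV (V t) z ^ 2 = dotp z ((V t).mulVec z) := Real.sq_sqrt h0
      have h2 : normV (V t) z ^ 2 ≤ Real.sqrt β ^ 2 := by
        have hnn : 0 ≤ normV (V t) z := Real.sqrt_nonneg _
        nlinarith [hconf]
      rw [Real.sq_sqrt (by linarith : (0:ℝ) ≤ β)] at h2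
      linarith
    have hsq : (dotp b z) ^ 2 ≤ L ^ 2 * β / lam := by
      rw [hrepr]
      calc (dotp u ((V t).mulVec z)) ^ 2
          ≤ dotp u ((V t).mulVec u) * dotp z ((V t).mulVec z) := hcs
        _ ≤ (L ^ 2 / lam) * β := by
            apply mul_le_mul huu hzz (hpsd t z) (by positivity)
        _ = L ^ 2 * β / lam := by ring
    calc |dotp b z| = Real.sqrt ((dotp b z) ^ 2) := (Real.sqrt_sq_eq_abs _).symm
      _ ≤ Real.sqrt (L ^ 2 * β / lam) := Real.sqrt_le_sqrt hsq
  -- bound |c|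
  have hcb : |c| ≤ Real.sqrt (L ^ 2 * β / lam) + 2 * Real.sqrt (Real.log T) := by
    have hyt : y (t + 1) = dotp θstar b + η (t + 1) := hy (t + 1) hmem
    have hc2 : c = dotp b z + η (t + 1) := by
      rw [hcdef, hyt, hzdef, aux.dotp_sub_right, aux.dotp_comm b θstar]
      ring
    rw [hc2]
    calc |dotp b z + η (t + 1)| ≤ |dotp b z| + |η (t + 1)| := abs_add_le _ _
      _ ≤ Real.sqrt (L ^ 2 * β / lam) + 2 * Real.sqrt (Real.log T) := add_le_add hdbz hη
  -- put together
  have hmain : l2 (θhat (t + 1) - θhat t)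
      ≤ (Real.sqrt (L ^ 2 * β / lam) + 2 * Real.sqrt (Real.log T)) * (L / lam) := by
    rw [hdiff, aux.l2_smul]
    exact mul_le_mul hcb hinvb (aux.l2_nonneg _) (by positivity)
  refine le_trans hmain ?_
  have hlt : Real.sqrt (Real.log T) ≤ Real.sqrt g := by
    apply Real.sqrt_le_sqrt
    rw [hgdef]
    apply Real.log_le_log hT0
    nlinarith
  exact aux.numeric L T g (Real.log T) β hL hT hg hβ hlt
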